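/- Let ε < 0.3 and let G = (Y_1, …, Y_n) with Y_i ∈ ℝ^{d×d_i} be a 4ε-nearly equal-norm Parseval matrix frame. Assume there is a diagonal matrix M ∈ ℝ^{d×d} with positive weakly decreasing diagonal entries such that (M·Y_1, …, M·Y_n) is a radial isotropic frame for the weight c = (d/n, …, d/n), i.e. ∑_{i=1}^n (d/n)·(M·Y_i)(M·Y_i)ᵀ/‖M·Y_i‖_F² = I_d. Let Z = (√(d/n)·M·Y_1/‖M·Y_1‖_F, …, √(d/n)·M·Y_n/‖M·Y_n‖_F). If γ ≤ min{1, ε} satisfies (1−γ)·d/n ≤ ‖Y_i‖_F² ≤ (1+γ)·d/n for all i, then dist²(G, Z) ≤ 8εd² + 4γd². (Moreover Z is an equal-norm Parseval matrix frame.) -/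

import Mathlib

open scoped BigOperators
open Matrix

namespace MFrames

/-- The squared Frobenius norm of a real matrix. -/
noncomputable def frobSq {α β : Type*} [Fintype α] [Fintype β] (X : Matrix α β ℝ) : ℝ :=
  ∑ i, ∑ j, X i j ^ 2

variable {d n : ℕ} {m : Fin n → ℕ}

/-- Squared distance between two tuples of matrices. -/
noncomputable def dist2 (F G : ∀ i : Fin n, Matrix (Fin d) (Fin (m i)) ℝ) : ℝ :=
  ∑ i, frobSq (F i - G i)

/-- The frame operator `∑ Xᵢ Xᵢᵀ`. -/
noncomputable def frameOp (F : ∀ i : Fin n, Matrix (Fin d) (Fin (m i)) ℝ) :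
    Matrix (Fin d) (Fin d) ℝ :=
  ∑ i, F i * (F i)ᵀ

/-- `F` is a matrix frame: `∑ Xᵢ Xᵢᵀ` is positive definite. -/
def IsMatrixFrame (F : ∀ i : Fin n, Matrix (Fin d) (Fin (m i)) ℝ) : Prop :=
  (frameOp F).PosDef

/-- `F` is an ε-nearly equal-norm Parseval matrix frame. -/
def NearlyENParseval (ε : ℝ) (F : ∀ i : Fin n, Matrix (Fin d) (Fin (m i)) ℝ) : Prop :=
  (frameOp F - (1 - ε) • (1 : Matrix (Fin d) (Fin d) ℝ)).PosSemidef ∧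
  ((1 + ε) • (1 : Matrix (Fin d) (Fin d) ℝ) - frameOp F).PosSemidef ∧
  ∀ i, (1 - ε) * ((d : ℝ) / n) ≤ frobSq (F i) ∧ frobSq (F i) ≤ (1 + ε) * ((d : ℝ) / n)

/-- `F` is an equal-norm Parseval matrix frame. -/
def EqualNormParseval (F : ∀ i : Fin n, Matrix (Fin d) (Fin (m i)) ℝ) : Prop :=
  frameOp F = 1 ∧ ∀ i, frobSq (F i) = (d : ℝ) / n

/-- The columns of the concatenated matrix `[X₁ | … | Xₙ]`. -/
def col (F : ∀ i : Fin n, Matrix (Fin d) (Fin (m i)) ℝ) (p : (i : Fin n) × Fin (m i)) :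
    Fin d → ℝ :=
  fun r => F p.1 r p.2

/-- `F` is generic: `n > d` and any `d` of the columns of `[X₁ | … | Xₙ]` are linearly
independent (hence a basis of `ℝ^d`). -/
def Generic (F : ∀ i : Fin n, Matrix (Fin d) (Fin (m i)) ℝ) : Prop :=
  d < n ∧ ∀ S : Finset ((i : Fin n) × Fin (m i)), S.card = d →
    LinearIndependent ℝ (fun p : S => col F (p : (i : Fin n) × Fin (m i)))

/-- Column span of a matrix. -/
def colSpan {k : ℕ} (X : Matrix (Fin d) (Fin k) ℝ) : Submodule ℝ (Fin d → ℝ) :=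
  Submodule.span ℝ (Set.range Xᵀ)

/-- The orbit polytope `K_F` of a tuple of matrices. -/
def orbitPolytope (F : ∀ i : Fin n, Matrix (Fin d) (Fin (m i)) ℝ) : Set (Fin n → ℝ) :=
  {c | (∀ i, 0 ≤ c i) ∧ (∑ i, c i = d) ∧
    ∀ I : Finset (Fin n),
      ∑ i ∈ I, c i ≤ (Module.finrank ℝ ↥(⨆ i ∈ I, colSpan (F i)) : ℝ)}

/-- `Φ_F(t) = log det (∑ e^{tᵢ} Xᵢ Xᵢᵀ)`. -/
noncomputable def Phi (F : ∀ i : Fin n, Matrix (Fin d) (Fin (m i)) ℝ) (t : Fin n → ℝ) : ℝ :=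
  Real.log (∑ i, Real.exp (t i) • (F i * (F i)ᵀ)).det

/-- The objective function `Φ_F(t) - ⟨t, c⟩` whose infimum over `t` is `f_F(c)`. -/
noncomputable def obj (F : ∀ i : Fin n, Matrix (Fin d) (Fin (m i)) ℝ)
    (c : Fin n → ℝ) (t : Fin n → ℝ) : ℝ :=
  Phi F t - ∑ i, t i * c i

/-- `Δ_S` for `S ∈ 𝒜`, where `S` is encoded as a function `σ` assigning to each `i` a subset
`σ i ⊆ {1,…,dᵢ}` of the columns of `Xᵢ` (with `i ∈ S` iff `σ i ≠ ∅`). -/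
noncomputable def Delta (F : ∀ i : Fin n, Matrix (Fin d) (Fin (m i)) ℝ)
    (σ : ∀ i : Fin n, Finset (Fin (m i))) : ℝ :=
  (∑ i, ∑ k ∈ σ i, Matrix.of (fun r s : Fin d => F i r k * F i s k)).det

/-- The index set `𝒜`: collections of subsets of columns with `d` columns in total. -/
def indexA (d : ℕ) (m : Fin n → ℕ) : Finset (∀ i : Fin n, Finset (Fin (m i))) :=
  Finset.univ.filter fun σ => (∑ i, (σ i).card) = d

/-- Membership in the semialgebraic set `𝕍(F, c)`.  (Summing `(σ i).card • ⋯` over all of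
`𝒜` is the same as summing `|Sᵢ| • ⋯` over those `S ∈ 𝒜` with `i ∈ S`.) -/
noncomputable def inVariety (F : ∀ i : Fin n, Matrix (Fin d) (Fin (m i)) ℝ)
    (c ξ : Fin n → ℝ) : Prop :=
  (∀ i, 0 < ξ i) ∧ ∀ i,
    (∑ σ ∈ indexA d m, ((σ i).card : ℝ) * (∏ l, ξ l ^ (σ l).card) * Delta F σ)
      = c i * ∑ σ ∈ indexA d m, (∏ l, ξ l ^ (σ l).card) * Delta F σ

/-- `A` transforms `(F, c)` into a radial isotropic frame. -/
noncomputable def TransformsToRIF (F : ∀ i : Fin n, Matrix (Fin d) (Fin (m i)) ℝ)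
    (c : Fin n → ℝ) (A : Matrix (Fin d) (Fin d) ℝ) : Prop :=
  ∑ i, (c i / frobSq (A * F i)) • ((A * F i) * (A * F i)ᵀ) = 1

/-- Columns of `X` all orthogonal to the subspace `T`, i.e. `Col(X) ⊆ T^⊥`. -/
def colsPerp {k : ℕ} (X : Matrix (Fin d) (Fin k) ℝ) (T : Submodule ℝ (Fin d → ℝ)) : Prop :=
  ∀ x ∈ T, Xᵀ.mulVec x = 0

end MFrames

namespace MFrames

private lemma ptwise {r x : ℝ} (hr : 0 ≤ r) (hx : 0 ≤ x) :
    r * (1 - x) ^ 2 ≤ 2 * max (r * x ^ 2 - r) 0 - (r * x ^ 2 - r) := by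
  rcases le_total x 1 with h | h
  · have h1 : r * x ^ 2 - r ≤ 0 := by nlinarith [mul_nonneg hr (by nlinarith : (0:ℝ) ≤ 1 - x ^ 2)]
    rw [max_eq_right h1]
    nlinarith [mul_nonneg (mul_nonneg hr (sub_nonneg.2 h)) hx]
  · have h1 : 0 ≤ r * x ^ 2 - r := by nlinarith [mul_nonneg hr (by nlinarith : (0:ℝ) ≤ x ^ 2 - 1)]
    rw [max_eq_left h1]
    nlinarith [mul_nonneg (mul_nonneg hr (sub_nonneg.2 h)) hx]

private lemma diag_nonneg' {d : ℕ} {A : Matrix (Fin d) (Fin d) ℝ} (h : A.PosSemidef)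
    (ℓ : Fin d) : 0 ≤ A ℓ ℓ := by
  exact h.diag_nonneg

private lemma key {d n : ℕ} (hd : 0 < d) (hn : 0 < n) {ε γ : ℝ}
    (hε0 : 0 ≤ ε) (hγ0 : 0 ≤ γ)
    (r p x : Fin n → Fin d → ℝ)
    (hr : ∀ i ℓ, 0 ≤ r i ℓ)
    (hp : ∀ i ℓ, p i ℓ = r i ℓ * x i ℓ ^ 2)
    (hx0 : ∀ i ℓ, 0 ≤ x i ℓ)
    (hxm : ∀ i : Fin n, ∀ ℓ ℓ' : Fin d, ℓ ≤ ℓ' → x i ℓ' ≤ x i ℓ)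
    (hcol : ∀ ℓ, 1 - 4 * ε ≤ ∑ i, r i ℓ)
    (hcolp : ∀ ℓ, ∑ i, p i ℓ = 1)
    (hrow : ∀ i, ∑ ℓ, r i ℓ ≤ (1 + γ) * ((d : ℝ) / n))
    (hrowp : ∀ i, ∑ ℓ, p i ℓ = (d : ℝ) / n) :
    ∑ i, ∑ ℓ, r i ℓ * (1 - x i ℓ) ^ 2 ≤ 8 * ε * (d : ℝ) ^ 2 + 4 * γ * (d : ℝ) ^ 2 := by
  classical
  have hn0 : (n : ℝ) ≠ 0 := Nat.cast_ne_zero.2 hn.ne'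
  have hd1 : (1 : ℝ) ≤ (d : ℝ) := by exact_mod_cast hd
  have hc0 : 0 ≤ (d : ℝ) / n := by positivity
  set q : Fin n → Fin d → ℝ := fun i ℓ => max (p i ℓ - r i ℓ) 0 with hq
  have step1 : ∑ i, ∑ ℓ, r i ℓ * (1 - x i ℓ) ^ 2
      ≤ ∑ i, ∑ ℓ, (2 * q i ℓ - (p i ℓ - r i ℓ)) := by
    refine Finset.sum_le_sum fun i _ => Finset.sum_le_sum fun ℓ _ => ?_
    have := ptwise (hr i ℓ) (hx0 i ℓ)
    simpa [hq, hp i ℓ] using this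
  have hA : ∀ ℓ, ∑ i, (p i ℓ - r i ℓ) ≤ 4 * ε := by
    intro ℓ
    rw [Finset.sum_sub_distrib, hcolp ℓ]
    linarith [hcol ℓ]
  -- per-column bound on the positive part
  have hQcol : ∀ ℓ : Fin d, ∑ i, q i ℓ ≤ 4 * ε * d + γ * d := by
    intro ℓ
    set P : Finset (Fin n) := Finset.univ.filter (fun i => (1:ℝ) ≤ x i ℓ) with hP
    set Pc : Finset (Fin n) := Finset.univ.filter (fun i => ¬ (1:ℝ) ≤ x i ℓ) with hPc
    have hsplit : ∑ i, q i ℓ = ∑ i ∈ P, (p i ℓ - r i ℓ) := by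
      rw [← Finset.sum_filter_add_sum_filter_not Finset.univ (fun i => (1:ℝ) ≤ x i ℓ)
        (fun i => q i ℓ)]
      have h1 : ∑ i ∈ P, q i ℓ = ∑ i ∈ P, (p i ℓ - r i ℓ) := by
        refine Finset.sum_congr rfl fun i hi => ?_
        have hx1 : (1:ℝ) ≤ x i ℓ := (Finset.mem_filter.1 hi).2
        have h0 : 0 ≤ p i ℓ - r i ℓ := by
          rw [hp i ℓ]
          nlinarith [mul_nonneg (hr i ℓ) (by nlinarith : (0:ℝ) ≤ x i ℓ ^ 2 - 1)]
        simp [hq, max_eq_left h0]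
      have h2 : ∑ i ∈ Pc, q i ℓ = 0 := by
        refine Finset.sum_eq_zero fun i hi => ?_
        have hx1 : x i ℓ ≤ 1 := le_of_not_ge (Finset.mem_filter.1 hi).2
        have h0 : p i ℓ - r i ℓ ≤ 0 := by
          have hxx := hx0 i ℓ
          rw [hp i ℓ]
          nlinarith [mul_nonneg (hr i ℓ) (by nlinarith : (0:ℝ) ≤ 1 - x i ℓ ^ 2)]
        simp [hq, max_eq_right h0]
      rw [h1]
      rw [show Finset.univ.filter (fun i => ¬ (1:ℝ) ≤ x i ℓ) = Pc from rfl]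
      rw [h2, add_zero]
    have hsplit2 : ∑ i ∈ P, (p i ℓ - r i ℓ)
        = (∑ i, (p i ℓ - r i ℓ)) + ∑ i ∈ Pc, (r i ℓ - p i ℓ) := by
      have h := Finset.sum_filter_add_sum_filter_not Finset.univ
        (fun i => (1:ℝ) ≤ x i ℓ) (fun i => p i ℓ - r i ℓ)
      have h2 : ∑ i ∈ Pc, (r i ℓ - p i ℓ) = - ∑ i ∈ Pc, (p i ℓ - r i ℓ) := by
        rw [← Finset.sum_neg_distrib]
        exact Finset.sum_congr rfl fun i _ => by ring
      rw [h2]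
      rw [hP, hPc] at *
      linarith [h]
    -- bound the Pc sum
    have hPcB : ∑ i ∈ Pc, (r i ℓ - p i ℓ)
        ≤ γ * d + ((d:ℝ) - 1) * (4 * ε) := by
      have hper : ∀ i ∈ Pc, r i ℓ - p i ℓ
          ≤ γ * ((d:ℝ)/n) + ∑ ℓ' ∈ Finset.univ.filter (fun ℓ' => ¬ ℓ ≤ ℓ'),
              (p i ℓ' - r i ℓ') := by
        intro i hi
        have hx1 : x i ℓ ≤ 1 := le_of_not_ge (Finset.mem_filter.1 hi).2
        have hsingle : r i ℓ - p i ℓ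
            ≤ ∑ ℓ' ∈ Finset.univ.filter (fun ℓ' => ℓ ≤ ℓ'), (r i ℓ' - p i ℓ') := by
          refine Finset.single_le_sum (f := fun ℓ' => r i ℓ' - p i ℓ') ?_ ?_
          · intro ℓ' hℓ'
            have hle : ℓ ≤ ℓ' := (Finset.mem_filter.1 hℓ').2
            have hxle : x i ℓ' ≤ x i ℓ := hxm i ℓ ℓ' hle
            have hxx := hx0 i ℓ'
            show 0 ≤ r i ℓ' - p i ℓ'
            rw [hp i ℓ']
            nlinarith [mul_nonneg (hr i ℓ') (by nlinarith : (0:ℝ) ≤ 1 - x i ℓ' ^ 2)]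
          · simp
        have hsum : ∑ ℓ' ∈ Finset.univ.filter (fun ℓ' => ℓ ≤ ℓ'), (r i ℓ' - p i ℓ')
            = ((∑ ℓ', r i ℓ') - (d:ℝ)/n)
              + ∑ ℓ' ∈ Finset.univ.filter (fun ℓ' => ¬ ℓ ≤ ℓ'), (p i ℓ' - r i ℓ') := by
          have h := Finset.sum_filter_add_sum_filter_not Finset.univ
            (fun ℓ' => ℓ ≤ ℓ') (fun ℓ' => r i ℓ' - p i ℓ')
          have h2 : ∑ ℓ' ∈ Finset.univ.filter (fun ℓ' => ¬ ℓ ≤ ℓ'), (p i ℓ' - r i ℓ')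
              = - ∑ ℓ' ∈ Finset.univ.filter (fun ℓ' => ¬ ℓ ≤ ℓ'), (r i ℓ' - p i ℓ') := by
            rw [← Finset.sum_neg_distrib]
            exact Finset.sum_congr rfl fun _ _ => by ring
          have h3 : ∑ ℓ', (r i ℓ' - p i ℓ') = (∑ ℓ', r i ℓ') - (d:ℝ)/n := by
            rw [Finset.sum_sub_distrib, hrowp i]
          rw [h2]
          linarith [h, h3]
        have hρ : (∑ ℓ', r i ℓ') - (d:ℝ)/n ≤ γ * ((d:ℝ)/n) := by
          have := hrow i; linarith
        linarith [hsingle, hsum.le, hsum.ge]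
      have hstep : ∑ i ∈ Pc, (r i ℓ - p i ℓ)
          ≤ ∑ i ∈ Pc, (γ * ((d:ℝ)/n) + ∑ ℓ' ∈ Finset.univ.filter (fun ℓ' => ¬ ℓ ≤ ℓ'),
              (p i ℓ' - r i ℓ')) := Finset.sum_le_sum hper
      have hcard : (Pc.card : ℝ) ≤ n := by
        have h := Finset.card_filter_le (Finset.univ : Finset (Fin n))
          (fun i => ¬ (1:ℝ) ≤ x i ℓ)
        rw [Finset.card_univ, Fintype.card_fin] at h
        exact_mod_cast h
      have hsum1 : ∑ _i ∈ Pc, γ * ((d:ℝ)/n) ≤ γ * d := by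
        rw [Finset.sum_const, nsmul_eq_mul]
        have h1 : (Pc.card : ℝ) * (γ * ((d:ℝ)/n)) ≤ (n:ℝ) * (γ * ((d:ℝ)/n)) := by
          have : 0 ≤ γ * ((d:ℝ)/n) := mul_nonneg hγ0 hc0
          exact mul_le_mul_of_nonneg_right hcard this
        calc (Pc.card : ℝ) * (γ * ((d:ℝ)/n)) ≤ (n:ℝ) * (γ * ((d:ℝ)/n)) := h1
          _ = γ * d := by field_simp
      have hsum2 : ∑ i ∈ Pc, ∑ ℓ' ∈ Finset.univ.filter (fun ℓ' => ¬ ℓ ≤ ℓ'),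
            (p i ℓ' - r i ℓ') ≤ ((d:ℝ) - 1) * (4 * ε) := by
        rw [Finset.sum_comm]
        have hinner : ∀ ℓ' ∈ Finset.univ.filter (fun ℓ' => ¬ ℓ ≤ ℓ'),
            ∑ i ∈ Pc, (p i ℓ' - r i ℓ') ≤ 4 * ε := by
          intro ℓ' hℓ'
          have hlt : ℓ' ≤ ℓ := le_of_lt (lt_of_not_ge (Finset.mem_filter.1 hℓ').2)
          have hsub : ∑ i ∈ Pc, (p i ℓ' - r i ℓ') ≤ ∑ i, (p i ℓ' - r i ℓ') := by
            refine Finset.sum_le_sum_of_subset_of_nonneg (Finset.subset_univ _) ?_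
            intro i _ hiPc
            have hx1 : (1:ℝ) ≤ x i ℓ := by
              by_contra hcon
              exact hiPc (Finset.mem_filter.2 ⟨Finset.mem_univ _, hcon⟩)
            have hxge : x i ℓ ≤ x i ℓ' := hxm i ℓ' ℓ hlt
            rw [hp i ℓ']
            nlinarith [mul_nonneg (hr i ℓ') (by nlinarith : (0:ℝ) ≤ x i ℓ' ^ 2 - 1)]
          exact le_trans hsub (hA ℓ')
        have hcard2 : ((Finset.univ.filter (fun ℓ' => ¬ ℓ ≤ ℓ')).card : ℝ)
            ≤ (d:ℝ) - 1 := by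
          have hsubs : Finset.univ.filter (fun ℓ' => ¬ ℓ ≤ ℓ') ⊆ Finset.univ.erase ℓ := by
            intro ℓ' hℓ'
            have := (Finset.mem_filter.1 hℓ').2
            refine Finset.mem_erase.2 ⟨?_, Finset.mem_univ _⟩
            rintro rfl; exact this le_rfl
          have := Finset.card_le_card hsubs
          have hce : (Finset.univ.erase ℓ).card = d - 1 := by
            rw [Finset.card_erase_of_mem (Finset.mem_univ _), Finset.card_univ, Fintype.card_fin]
          rw [hce] at this
          have : ((Finset.univ.filter (fun ℓ' => ¬ ℓ ≤ ℓ')).card : ℝ) ≤ ((d - 1 : ℕ) : ℝ) := by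
            exact_mod_cast this
          rwa [Nat.cast_sub hd, Nat.cast_one] at this
        calc ∑ ℓ' ∈ Finset.univ.filter (fun ℓ' => ¬ ℓ ≤ ℓ'), ∑ i ∈ Pc, (p i ℓ' - r i ℓ')
            ≤ ∑ _ℓ' ∈ Finset.univ.filter (fun ℓ' => ¬ ℓ ≤ ℓ'), 4 * ε :=
              Finset.sum_le_sum hinner
          _ = ((Finset.univ.filter (fun ℓ' => ¬ ℓ ≤ ℓ')).card : ℝ) * (4 * ε) := by
              rw [Finset.sum_const, nsmul_eq_mul]
          _ ≤ ((d:ℝ) - 1) * (4 * ε) := by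
              have h4 : 0 ≤ 4 * ε := by linarith
              exact mul_le_mul_of_nonneg_right hcard2 h4
      calc ∑ i ∈ Pc, (r i ℓ - p i ℓ)
          ≤ ∑ i ∈ Pc, (γ * ((d:ℝ)/n) + ∑ ℓ' ∈ Finset.univ.filter (fun ℓ' => ¬ ℓ ≤ ℓ'),
              (p i ℓ' - r i ℓ')) := hstep
        _ = (∑ _i ∈ Pc, γ * ((d:ℝ)/n)) + ∑ i ∈ Pc, ∑ ℓ' ∈ Finset.univ.filter
              (fun ℓ' => ¬ ℓ ≤ ℓ'), (p i ℓ' - r i ℓ') := Finset.sum_add_distrib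
        _ ≤ γ * d + ((d:ℝ) - 1) * (4 * ε) := add_le_add hsum1 hsum2
    rw [hsplit, hsplit2]
    have := hA ℓ
    nlinarith [hPcB]
  -- assemble
  have hQ : ∑ i, ∑ ℓ, q i ℓ ≤ (d:ℝ) * (4 * ε * d + γ * d) := by
    rw [Finset.sum_comm]
    calc ∑ ℓ, ∑ i, q i ℓ ≤ ∑ _ℓ : Fin d, (4 * ε * d + γ * d) :=
          Finset.sum_le_sum fun ℓ _ => hQcol ℓ
      _ = (d:ℝ) * (4 * ε * d + γ * d) := by
          rw [Finset.sum_const, nsmul_eq_mul, Finset.card_univ, Fintype.card_fin]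
  have hsumP : ∑ i, ∑ ℓ, p i ℓ = (d:ℝ) := by
    have : ∀ i : Fin n, ∑ ℓ, p i ℓ = (d:ℝ)/n := hrowp
    rw [Finset.sum_congr rfl fun i _ => this i, Finset.sum_const, nsmul_eq_mul,
      Finset.card_univ, Fintype.card_fin]
    field_simp
  have hsumR : ∑ i, ∑ ℓ, r i ℓ ≤ (1 + γ) * d := by
    calc ∑ i, ∑ ℓ, r i ℓ ≤ ∑ _i : Fin n, (1 + γ) * ((d:ℝ)/n) :=
          Finset.sum_le_sum fun i _ => hrow i
      _ = (n:ℝ) * ((1 + γ) * ((d:ℝ)/n)) := by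
          rw [Finset.sum_const, nsmul_eq_mul, Finset.card_univ, Fintype.card_fin]
      _ = (1 + γ) * d := by field_simp
  have expand : ∑ i, ∑ ℓ, (2 * q i ℓ - (p i ℓ - r i ℓ))
      = 2 * (∑ i, ∑ ℓ, q i ℓ) - ((∑ i, ∑ ℓ, p i ℓ) - (∑ i, ∑ ℓ, r i ℓ)) := by
    simp only [Finset.sum_sub_distrib, Finset.mul_sum]
  rw [expand] at step1
  nlinarith [step1, hQ, hsumP, hsumR, mul_nonneg hγ0 (le_trans zero_le_one hd1)]


/-- **Lemma (distance to the induced equal-norm Parseval frame).**  Let `G` be a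
`4ε`-nearly equal-norm Parseval matrix frame (`0 < ε < 0.3`), `M = diag(λ₁ ≥ … ≥ λ_d > 0)`
a diagonal matrix such that `(M·Y₁, …, M·Yₙ)` is a radial isotropic frame for the weight
`c = (d/n, …, d/n)`, and `Z` the induced equal-norm Parseval frame
`Zᵢ = √(d/n) · M·Yᵢ / ‖M·Yᵢ‖_F`.  If `γ ≤ min{1, ε}` satisfies
`(1−γ) d/n ≤ ‖Yᵢ‖_F² ≤ (1+γ) d/n` for all `i`, then `dist²(G, Z) ≤ 8εd² + 4γd²`
(and `Z` is an equal-norm Parseval matrix frame). -/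
theorem dist_to_induced_equal_norm_parseval {d n : ℕ} (hd : 0 < d) (hn : 0 < n)
    {m : Fin n → ℕ} {ε γ : ℝ} (hε0 : 0 < ε) (hε : ε < 0.3)
    (G : ∀ i : Fin n, Matrix (Fin d) (Fin (m i)) ℝ)
    (hG : NearlyENParseval (4 * ε) G)
    (lam : Fin d → ℝ) (hpos : ∀ ℓ, 0 < lam ℓ) (hmono : Antitone lam)
    (hRIF : TransformsToRIF G (fun _ => (d : ℝ) / n) (Matrix.diagonal lam))
    (hγ1 : γ ≤ 1) (hγε : γ ≤ ε)
    (hγ : ∀ i, (1 - γ) * ((d : ℝ) / n) ≤ frobSq (G i) ∧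
      frobSq (G i) ≤ (1 + γ) * ((d : ℝ) / n)) :
    dist2 G (fun i =>
        (Real.sqrt ((d : ℝ) / n) / Real.sqrt (frobSq (Matrix.diagonal lam * G i))) •
          (Matrix.diagonal lam * G i)) ≤ 8 * ε * (d : ℝ) ^ 2 + 4 * γ * (d : ℝ) ^ 2 ∧
    EqualNormParseval (fun i =>
        (Real.sqrt ((d : ℝ) / n) / Real.sqrt (frobSq (Matrix.diagonal lam * G i))) •
          (Matrix.diagonal lam * G i)) := by
  classical
  obtain ⟨hPSD1, _hPSD2, _hnorm⟩ := hG
  have hn0 : (n : ℝ) ≠ 0 := Nat.cast_ne_zero.2 hn.ne'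
  have hc : 0 < (d : ℝ) / n := div_pos (Nat.cast_pos.2 hd) (Nat.cast_pos.2 hn)
  have hγ0 : 0 ≤ γ := by
    obtain ⟨h1, h2⟩ := hγ ⟨0, hn⟩
    nlinarith
  have hγlt : γ < 1 := by
    have : (0.3 : ℝ) < 1 := by norm_num
    linarith
  have hr0 : ∀ (i : Fin n) (ℓ : Fin d), 0 ≤ ∑ k, G i ℓ k ^ 2 :=
    fun i ℓ => Finset.sum_nonneg fun k _ => sq_nonneg _
  have hfrobG : ∀ i, frobSq (G i) = ∑ ℓ, ∑ k, G i ℓ k ^ 2 := fun i => rfl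
  have hAentry : ∀ (i : Fin n) (ℓ : Fin d) k,
      (Matrix.diagonal lam * G i) ℓ k = lam ℓ * G i ℓ k :=
    fun i ℓ k => Matrix.diagonal_mul lam (G i) ℓ k
  have hfA : ∀ i, frobSq (Matrix.diagonal lam * G i)
      = ∑ ℓ, lam ℓ ^ 2 * ∑ k, G i ℓ k ^ 2 := by
    intro i
    unfold frobSq
    refine Finset.sum_congr rfl fun ℓ _ => ?_
    rw [Finset.mul_sum]
    refine Finset.sum_congr rfl fun k _ => ?_
    rw [hAentry i ℓ k]; ring
  have hρpos : ∀ i, 0 < ∑ ℓ, ∑ k, G i ℓ k ^ 2 := by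
    intro i
    have h1 := (hγ i).1
    rw [hfrobG i] at h1
    nlinarith [mul_pos (by linarith : (0:ℝ) < 1 - γ) hc]
  have hfpos : ∀ i, 0 < frobSq (Matrix.diagonal lam * G i) := by
    intro i
    have hex : ∃ ℓ, 0 < ∑ k, G i ℓ k ^ 2 := by
      by_contra hno
      push_neg at hno
      have : ∑ ℓ, ∑ k, G i ℓ k ^ 2 ≤ 0 := Finset.sum_nonpos fun ℓ _ => hno ℓ
      linarith [hρpos i]
    obtain ⟨ℓ₀, hℓ₀⟩ := hex
    rw [hfA i]
    have h1 : lam ℓ₀ ^ 2 * ∑ k, G i ℓ₀ k ^ 2 ≤ ∑ ℓ, lam ℓ ^ 2 * ∑ k, G i ℓ k ^ 2 :=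
      Finset.single_le_sum (f := fun ℓ => lam ℓ ^ 2 * ∑ k, G i ℓ k ^ 2)
        (fun ℓ _ => mul_nonneg (sq_nonneg _) (hr0 i ℓ)) (Finset.mem_univ _)
    nlinarith [pow_pos (hpos ℓ₀) 2]
  -- abstract the scaling coefficients
  have main : ∀ s : Fin n → ℝ,
      (∀ i, s i = Real.sqrt ((d : ℝ) / n) / Real.sqrt (frobSq (Matrix.diagonal lam * G i))) →
      dist2 G (fun i => s i • (Matrix.diagonal lam * G i))
          ≤ 8 * ε * (d : ℝ) ^ 2 + 4 * γ * (d : ℝ) ^ 2 ∧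
      EqualNormParseval (fun i => s i • (Matrix.diagonal lam * G i)) := by
    intro s hs
    have hspos : ∀ i, 0 < s i := by
      intro i
      rw [hs i]
      exact div_pos (Real.sqrt_pos.2 hc) (Real.sqrt_pos.2 (hfpos i))
    have hssq : ∀ i, s i ^ 2 = ((d : ℝ) / n) / frobSq (Matrix.diagonal lam * G i) := by
      intro i
      rw [hs i, div_pow, Real.sq_sqrt hc.le, Real.sq_sqrt (hfpos i).le]
    -- column sums of p
    have hcolp : ∀ ℓ, ∑ i, (∑ k, G i ℓ k ^ 2) * (s i * lam ℓ) ^ 2 = 1 := by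
      intro ℓ
      have h := Matrix.ext_iff.2 hRIF ℓ ℓ
      rw [Matrix.sum_apply, Matrix.one_apply_eq] at h
      rw [← h]
      refine Finset.sum_congr rfl fun i _ => ?_
      rw [Matrix.smul_apply, smul_eq_mul, Matrix.mul_apply]
      have h2 : ∑ k, (Matrix.diagonal lam * G i) ℓ k * (Matrix.diagonal lam * G i)ᵀ k ℓ
          = lam ℓ ^ 2 * ∑ k, G i ℓ k ^ 2 := by
        rw [Finset.mul_sum]
        refine Finset.sum_congr rfl fun k _ => ?_
        rw [Matrix.transpose_apply, hAentry i ℓ k]; ring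
      rw [h2, mul_pow, hssq i]
      show (∑ k, G i ℓ k ^ 2) * (((d:ℝ)/n) / frobSq (Matrix.diagonal lam * G i) * lam ℓ ^ 2)
          = ((d:ℝ)/n) / frobSq (Matrix.diagonal lam * G i) * (lam ℓ ^ 2 * ∑ k, G i ℓ k ^ 2)
      ring
    -- row sums of p
    have hrowp : ∀ i, ∑ ℓ, (∑ k, G i ℓ k ^ 2) * (s i * lam ℓ) ^ 2 = (d : ℝ) / n := by
      intro i
      have h1 : ∑ ℓ, (∑ k, G i ℓ k ^ 2) * (s i * lam ℓ) ^ 2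
          = s i ^ 2 * ∑ ℓ, lam ℓ ^ 2 * ∑ k, G i ℓ k ^ 2 := by
        rw [Finset.mul_sum]
        refine Finset.sum_congr rfl fun ℓ _ => ?_
        ring
      rw [h1, ← hfA i, hssq i, div_mul_cancel₀ _ (hfpos i).ne']
    -- column sums of r
    have hframe : ∀ ℓ, frameOp G ℓ ℓ = ∑ i, ∑ k, G i ℓ k ^ 2 := by
      intro ℓ
      show (∑ i, G i * (G i)ᵀ) ℓ ℓ = _
      rw [Matrix.sum_apply]
      refine Finset.sum_congr rfl fun i _ => ?_
      rw [Matrix.mul_apply]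
      refine Finset.sum_congr rfl fun k _ => ?_
      rw [Matrix.transpose_apply, sq]
    have hcol : ∀ ℓ, 1 - 4 * ε ≤ ∑ i, ∑ k, G i ℓ k ^ 2 := by
      intro ℓ
      have h0 := diag_nonneg' hPSD1 ℓ
      rw [Matrix.sub_apply, Matrix.smul_apply, Matrix.one_apply_eq, smul_eq_mul, mul_one,
        hframe ℓ] at h0
      linarith
    have hrow : ∀ i, ∑ ℓ, ∑ k, G i ℓ k ^ 2 ≤ (1 + γ) * ((d : ℝ) / n) := by
      intro i
      have := (hγ i).2
      rwa [hfrobG i] at this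
    have hxm : ∀ (i : Fin n) (ℓ ℓ' : Fin d), ℓ ≤ ℓ' → s i * lam ℓ' ≤ s i * lam ℓ :=
      fun i ℓ ℓ' hle => mul_le_mul_of_nonneg_left (hmono hle) (hspos i).le
    have hx0 : ∀ (i : Fin n) (ℓ : Fin d), 0 ≤ s i * lam ℓ :=
      fun i ℓ => mul_nonneg (hspos i).le (hpos ℓ).le
    have hb := key hd hn hε0.le hγ0 (fun i ℓ => ∑ k, G i ℓ k ^ 2)
      (fun i ℓ => (∑ k, G i ℓ k ^ 2) * (s i * lam ℓ) ^ 2)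
      (fun i ℓ => s i * lam ℓ)
      hr0 (fun i ℓ => rfl) hx0 hxm hcol hcolp hrow hrowp
    have hdist : dist2 G (fun i => s i • (Matrix.diagonal lam * G i))
        = ∑ i, ∑ ℓ, (∑ k, G i ℓ k ^ 2) * (1 - s i * lam ℓ) ^ 2 := by
      unfold dist2 frobSq
      refine Finset.sum_congr rfl fun i _ => Finset.sum_congr rfl fun ℓ _ => ?_
      have hterm : ∀ k, (G i - s i • (Matrix.diagonal lam * G i)) ℓ k
          = (1 - s i * lam ℓ) * G i ℓ k := by
        intro k
        rw [Matrix.sub_apply, Matrix.smul_apply, hAentry i ℓ k, smul_eq_mul]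
        ring
      calc ∑ k, ((G i - s i • (Matrix.diagonal lam * G i)) ℓ k) ^ 2
          = ∑ k, (1 - s i * lam ℓ) ^ 2 * G i ℓ k ^ 2 :=
            Finset.sum_congr rfl fun k _ => by rw [hterm k]; ring
        _ = (∑ k, G i ℓ k ^ 2) * (1 - s i * lam ℓ) ^ 2 := by
            rw [← Finset.mul_sum]; ring
    constructor
    · rw [hdist]; exact hb
    · constructor
      · show frameOp (fun i => s i • (Matrix.diagonal lam * G i)) = 1
        rw [← hRIF]
        show ∑ i, (s i • (Matrix.diagonal lam * G i)) * (s i • (Matrix.diagonal lam * G i))ᵀ = _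
        refine Finset.sum_congr rfl fun i _ => ?_
        rw [Matrix.transpose_smul, Matrix.smul_mul, Matrix.mul_smul, smul_smul]
        congr 1
        show s i * s i = ((d : ℝ) / n) / frobSq (Matrix.diagonal lam * G i)
        rw [hs i, div_mul_div_comm, Real.mul_self_sqrt hc.le, Real.mul_self_sqrt (hfpos i).le]
      · intro i
        have h1 : frobSq (s i • (Matrix.diagonal lam * G i))
            = s i ^ 2 * frobSq (Matrix.diagonal lam * G i) := by
          unfold frobSq
          rw [Finset.mul_sum]
          refine Finset.sum_congr rfl fun ℓ _ => ?_
          rw [Finset.mul_sum]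
          refine Finset.sum_congr rfl fun k _ => ?_
          rw [Matrix.smul_apply, smul_eq_mul]; ring
        show frobSq (s i • (Matrix.diagonal lam * G i)) = (d : ℝ) / n
        rw [h1, hssq i, div_mul_cancel₀ _ (hfpos i).ne']
  exact main _ fun i => rfl


end MFrames
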